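/- Let A be an n×n symmetric positive definite matrix with unit diagonal having at most q nonzero elements in any row. Then κ(A) ≤ q · min_D κ(D A D) over positive diagonal matrices D. -/

import Mathlib

open Matrix Finset

/-- The 2-norm condition number `κ(M) = ‖M‖₂ ‖M⁻¹‖₂`, via the operator norm on
Euclidean space. -/
noncomputable def kappa {n : ℕ} (M : Matrix (Fin n) (Fin n) ℝ) : ℝ :=
  ‖Matrix.toEuclideanCLM (𝕜 := ℝ) M‖ * ‖Matrix.toEuclideanCLM (𝕜 := ℝ) M⁻¹‖

section aux
variable {n : ℕ}

private lemma clm_apply (M : Matrix (Fin n) (Fin n) ℝ) (x : EuclideanSpace ℝ (Fin n)) (i : Fin n) :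
    (Matrix.toEuclideanCLM (𝕜 := ℝ) M x) i = ∑ j, M i j * x j := rfl

private lemma euc_norm (x : EuclideanSpace ℝ (Fin n)) : ‖x‖ = Real.sqrt (∑ i, (x i)^2) := by
  rw [EuclideanSpace.norm_eq]; simp [sq_abs]

private lemma norm_clm_le (M : Matrix (Fin n) (Fin n) ℝ) (r : ℝ) (hr : 0 ≤ r)
    (h : ∀ x : EuclideanSpace ℝ (Fin n),
      ∑ i, ((Matrix.toEuclideanCLM (𝕜 := ℝ) M x) i)^2 ≤ r^2 * ∑ i, (x i)^2) :
    ‖Matrix.toEuclideanCLM (𝕜 := ℝ) M‖ ≤ r := by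
  apply ContinuousLinearMap.opNorm_le_bound _ hr
  intro x
  rw [euc_norm, euc_norm, ← Real.sqrt_sq hr, ← Real.sqrt_mul (sq_nonneg r)]
  exact Real.sqrt_le_sqrt (h x)

/-- coordinate bound -/
private lemma coord_le_norm (x : EuclideanSpace ℝ (Fin n)) (i : Fin n) : |x i| ≤ ‖x‖ := by
  rw [euc_norm, ← Real.sqrt_sq_eq_abs]
  exact Real.sqrt_le_sqrt (Finset.single_le_sum (f := fun j => (x j)^2)
    (fun j _ => sq_nonneg _) (mem_univ i))

/-- diagonal entries are at most the operator norm -/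
private lemma diag_le_norm (M : Matrix (Fin n) (Fin n) ℝ) (i : Fin n) :
    M i i ≤ ‖Matrix.toEuclideanCLM (𝕜 := ℝ) M‖ := by
  set e : EuclideanSpace ℝ (Fin n) := EuclideanSpace.single i 1 with he
  have h1 : (Matrix.toEuclideanCLM (𝕜 := ℝ) M e) i = M i i := by
    rw [clm_apply]
    simp [he, EuclideanSpace.single_apply]
  calc M i i ≤ |(Matrix.toEuclideanCLM (𝕜 := ℝ) M e) i| := by rw [h1]; exact le_abs_self _
    _ ≤ ‖Matrix.toEuclideanCLM (𝕜 := ℝ) M e‖ := coord_le_norm _ _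
    _ ≤ ‖Matrix.toEuclideanCLM (𝕜 := ℝ) M‖ * ‖e‖ := (Matrix.toEuclideanCLM (𝕜 := ℝ) M).le_opNorm e
    _ = ‖Matrix.toEuclideanCLM (𝕜 := ℝ) M‖ := by
        rw [he, EuclideanSpace.norm_single, norm_one, mul_one]

/-- operator norm of a diagonal matrix -/
private lemma norm_diag_le (d : Fin n → ℝ) (c : ℝ) (hc : 0 ≤ c) (h : ∀ i, |d i| ≤ c) :
    ‖Matrix.toEuclideanCLM (𝕜 := ℝ) (Matrix.diagonal d)‖ ≤ c := by
  apply norm_clm_le _ c hc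
  intro x
  have h1 : ∀ i, ((Matrix.toEuclideanCLM (𝕜 := ℝ) (Matrix.diagonal d) x) i)^2
      = (d i)^2 * (x i)^2 := by
    intro i
    rw [clm_apply]
    rw [show (∑ j, Matrix.diagonal d i j * x j) = d i * x i by
      simp [Matrix.diagonal_apply, Finset.sum_ite_eq]]
    ring
  calc ∑ i, ((Matrix.toEuclideanCLM (𝕜 := ℝ) (Matrix.diagonal d) x) i)^2
      = ∑ i, (d i)^2 * (x i)^2 := by simp_rw [h1]
    _ ≤ ∑ i, c^2 * (x i)^2 := by
        apply Finset.sum_le_sum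
        intro i _
        have : (d i)^2 ≤ c^2 := by
          rw [← sq_abs (d i)]
          exact pow_le_pow_left₀ (abs_nonneg _) (h i) 2
        exact mul_le_mul_of_nonneg_right this (sq_nonneg _)
    _ = c^2 * ∑ i, (x i)^2 := by rw [Finset.mul_sum]

/-- symmetric matrices: operator norm bounded by max row sum of absolute values -/
private lemma norm_le_rowsum (M : Matrix (Fin n) (Fin n) ℝ) (hsym : ∀ i j, M j i = M i j)
    (r : ℝ) (hr : 0 ≤ r) (h : ∀ i, ∑ j, |M i j| ≤ r) :
    ‖Matrix.toEuclideanCLM (𝕜 := ℝ) M‖ ≤ r := by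
  apply norm_clm_le _ r hr
  intro x
  have key : ∀ i, ((Matrix.toEuclideanCLM (𝕜 := ℝ) M x) i)^2
      ≤ r * ∑ j, |M i j| * (x j)^2 := by
    intro i
    rw [clm_apply]
    have h1 : |∑ j, M i j * x j| ≤ ∑ j, |M i j| * |x j| := by
      refine (Finset.abs_sum_le_sum_abs _ _).trans ?_
      apply Finset.sum_le_sum
      intro j _
      rw [abs_mul]
    have h2 : (∑ j, M i j * x j)^2 ≤ (∑ j, |M i j| * |x j|)^2 := by
      rw [← sq_abs (∑ j, M i j * x j)]
      exact pow_le_pow_left₀ (abs_nonneg _) h1 2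
    have h3 : (∑ j, |M i j| * |x j|)^2 ≤ (∑ j, |M i j|) * (∑ j, |M i j| * (x j)^2) := by
      have := Finset.sum_mul_sq_le_sq_mul_sq Finset.univ
        (fun j => Real.sqrt |M i j|) (fun j => Real.sqrt |M i j| * |x j|)
      have e1 : ∀ j : Fin n, Real.sqrt |M i j| * (Real.sqrt |M i j| * |x j|)
          = |M i j| * |x j| := by
        intro j
        rw [← mul_assoc, Real.mul_self_sqrt (abs_nonneg _)]
      have e2 : ∀ j : Fin n, (Real.sqrt |M i j|)^2 = |M i j| := fun j =>
        Real.sq_sqrt (abs_nonneg _)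
      have e3 : ∀ j : Fin n, (Real.sqrt |M i j| * |x j|)^2 = |M i j| * (x j)^2 := by
        intro j
        rw [mul_pow, e2, sq_abs]
      simp_rw [e1, e2, e3] at this
      exact this
    have h4 : (∑ j, |M i j|) * (∑ j, |M i j| * (x j)^2)
        ≤ r * ∑ j, |M i j| * (x j)^2 := by
      apply mul_le_mul_of_nonneg_right (h i)
      exact Finset.sum_nonneg fun j _ => mul_nonneg (abs_nonneg _) (sq_nonneg _)
    exact h2.trans (h3.trans h4)
  calc ∑ i, ((Matrix.toEuclideanCLM (𝕜 := ℝ) M x) i)^2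
      ≤ ∑ i, r * ∑ j, |M i j| * (x j)^2 := Finset.sum_le_sum fun i _ => key i
    _ = r * ∑ j, (∑ i, |M i j|) * (x j)^2 := by
        rw [← Finset.mul_sum, Finset.sum_comm]
        congr 1
        refine Finset.sum_congr rfl fun j _ => ?_
        rw [Finset.sum_mul]
    _ ≤ r * ∑ j, r * (x j)^2 := by
        apply mul_le_mul_of_nonneg_left _ hr
        apply Finset.sum_le_sum
        intro j _
        apply mul_le_mul_of_nonneg_right _ (sq_nonneg _)
        calc ∑ i, |M i j| = ∑ i, |M j i| := by
              refine Finset.sum_congr rfl fun i _ => by rw [hsym]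
          _ ≤ r := h j
    _ = r^2 * ∑ j, (x j)^2 := by rw [← Finset.mul_sum]; ring

end aux

/-- Van der Sluis, Theorem 4.3: if `A` is symmetric positive definite with unit
diagonal and at most `q` nonzero entries in any row, then
`κ(A) ≤ q ⋅ min_D κ(D A D)` over positive diagonal `D`. -/
theorem stmt_14 (n : ℕ) (A : Matrix (Fin n) (Fin n) ℝ)
    (hA : A.PosDef) (hdiag : ∀ i, A i i = 1)
    (q : ℕ) (hq : ∀ i, (Finset.univ.filter fun j => A i j ≠ 0).card ≤ q) :
    ∀ d : Fin n → ℝ, (∀ i, 0 < d i) →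
      kappa A ≤ q * kappa (Matrix.diagonal d * A * Matrix.diagonal d) := by
  intro d hd
  set D := Matrix.diagonal d with hD
  set B := D * A * D with hB
  -- symmetry of A
  have hsym : ∀ i j, A j i = A i j := by
    intro i j
    have := congrFun (congrFun hA.1 i) j
    simpa [Matrix.conjTranspose_apply] using this
  -- entries of A are at most 1 in absolute value
  have hentry : ∀ i j, |A i j| ≤ 1 := by
    intro i j
    rcases eq_or_ne i j with h | h
    · rw [h, hdiag]; simp
    · have quad : ∀ c : ℝ, 0 < 1 + 2 * c * A i j + c^2 := by
        intro c
        have hx : (Pi.single i 1 + Pi.single j c : Fin n → ℝ) ≠ 0 := by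
          intro hcon
          have := congrFun hcon i
          simp [Pi.single_apply, h] at this
        have := hA.dotProduct_mulVec_pos hx
        have comp : dotProduct (star (Pi.single i 1 + Pi.single j c : Fin n → ℝ))
            (A *ᵥ (Pi.single i 1 + Pi.single j c)) = 1 + 2 * c * A i j + c^2 := by
          rw [star_trivial, Matrix.mulVec_add, Matrix.mulVec_single, Matrix.mulVec_single]
          rw [dotProduct_add, add_dotProduct, add_dotProduct]
          simp only [single_dotProduct, Pi.add_apply, Pi.smul_apply, op_smul_eq_mul, Matrix.col_apply]
          rw [hdiag i, hdiag j, hsym i j]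
          ring
        rw [comp] at this
        exact this
      have h1 := quad 1
      have h2 := quad (-1)
      rw [abs_le]
      constructor <;> nlinarith
  -- invertibility facts
  have hAdet : IsUnit A.det := (ne_of_gt hA.det_pos).isUnit
  have hDdet : IsUnit D.det := by
    rw [hD, Matrix.det_diagonal]
    exact (ne_of_gt (Finset.prod_pos fun i _ => hd i)).isUnit
  -- A⁻¹ = D * B⁻¹ * D
  have hABinv : A⁻¹ = D * B⁻¹ * D := by
    have hBinv : B⁻¹ = D⁻¹ * A⁻¹ * D⁻¹ := by
      rw [hB, Matrix.mul_inv_rev, Matrix.mul_inv_rev, ← mul_assoc]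
    rw [hBinv, ← mul_assoc, ← mul_assoc, Matrix.mul_nonsing_inv _ hDdet, one_mul,
      mul_assoc, Matrix.nonsing_inv_mul _ hDdet, mul_one]
  -- norm bounds
  have hTA : ‖Matrix.toEuclideanCLM (𝕜 := ℝ) A‖ ≤ (q : ℝ) := by
    apply norm_le_rowsum A hsym _ (Nat.cast_nonneg q)
    intro i
    calc ∑ j, |A i j| = ∑ j ∈ Finset.univ.filter (fun j => A i j ≠ 0), |A i j| := by
          rw [Finset.sum_filter_of_ne]
          intro j _ hne
          intro hcon
          exact hne (by rw [hcon]; simp)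
      _ ≤ ∑ j ∈ Finset.univ.filter (fun j => A i j ≠ 0), 1 :=
          Finset.sum_le_sum fun j _ => hentry i j
      _ = ((Finset.univ.filter fun j => A i j ≠ 0).card : ℝ) := by simp
      _ ≤ (q : ℝ) := Nat.cast_le.mpr (hq i)
  have hBii : ∀ i, B i i = (d i)^2 := by
    intro i
    rw [hB, Matrix.mul_diagonal, Matrix.diagonal_mul, hdiag i]
    ring
  have hTD : ‖Matrix.toEuclideanCLM (𝕜 := ℝ) D‖
      ≤ Real.sqrt ‖Matrix.toEuclideanCLM (𝕜 := ℝ) B‖ := by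
    apply norm_diag_le d _ (Real.sqrt_nonneg _)
    intro i
    rw [abs_of_pos (hd i), show d i = Real.sqrt ((d i)^2) from (Real.sqrt_sq (hd i).le).symm]
    apply Real.sqrt_le_sqrt
    rw [← hBii i]
    exact diag_le_norm B i
  have hTD2 : ‖Matrix.toEuclideanCLM (𝕜 := ℝ) D‖^2 ≤ ‖Matrix.toEuclideanCLM (𝕜 := ℝ) B‖ := by
    calc ‖Matrix.toEuclideanCLM (𝕜 := ℝ) D‖^2
        ≤ (Real.sqrt ‖Matrix.toEuclideanCLM (𝕜 := ℝ) B‖)^2 :=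
          pow_le_pow_left₀ (norm_nonneg _) hTD 2
      _ = ‖Matrix.toEuclideanCLM (𝕜 := ℝ) B‖ := Real.sq_sqrt (norm_nonneg _)
  have hTAinv : ‖Matrix.toEuclideanCLM (𝕜 := ℝ) A⁻¹‖
      ≤ ‖Matrix.toEuclideanCLM (𝕜 := ℝ) D‖ * ‖Matrix.toEuclideanCLM (𝕜 := ℝ) B⁻¹‖
        * ‖Matrix.toEuclideanCLM (𝕜 := ℝ) D‖ := by
    rw [hABinv, _root_.map_mul, _root_.map_mul]
    calc ‖Matrix.toEuclideanCLM (𝕜 := ℝ) D * Matrix.toEuclideanCLM (𝕜 := ℝ) B⁻¹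
          * Matrix.toEuclideanCLM (𝕜 := ℝ) D‖
        ≤ ‖Matrix.toEuclideanCLM (𝕜 := ℝ) D * Matrix.toEuclideanCLM (𝕜 := ℝ) B⁻¹‖
          * ‖Matrix.toEuclideanCLM (𝕜 := ℝ) D‖ := norm_mul_le _ _
      _ ≤ ‖Matrix.toEuclideanCLM (𝕜 := ℝ) D‖ * ‖Matrix.toEuclideanCLM (𝕜 := ℝ) B⁻¹‖
          * ‖Matrix.toEuclideanCLM (𝕜 := ℝ) D‖ :=
          mul_le_mul_of_nonneg_right (norm_mul_le _ _) (norm_nonneg _)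
  -- final chain
  unfold kappa
  have step1 : ‖Matrix.toEuclideanCLM (𝕜 := ℝ) A‖ * ‖Matrix.toEuclideanCLM (𝕜 := ℝ) A⁻¹‖
      ≤ (q : ℝ) * (‖Matrix.toEuclideanCLM (𝕜 := ℝ) D‖ * ‖Matrix.toEuclideanCLM (𝕜 := ℝ) B⁻¹‖
        * ‖Matrix.toEuclideanCLM (𝕜 := ℝ) D‖) :=
    mul_le_mul hTA hTAinv (norm_nonneg _) (Nat.cast_nonneg q)
  refine step1.trans ?_
  apply mul_le_mul_of_nonneg_left _ (Nat.cast_nonneg q)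
  have hb := norm_nonneg (Matrix.toEuclideanCLM (𝕜 := ℝ) B⁻¹)
  have hdn := norm_nonneg (Matrix.toEuclideanCLM (𝕜 := ℝ) D)
  nlinarith [hTD2, hb, hdn]
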